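/- For all n ≥ 20, B_n / B_{n-1} < T(n), where T(n) = 11/2 + (5√5)/2 - (11/2 + (5√5)/2)/n + ((7√5)/10 + 3/2)/n^2 + 1/(25n^3) + (1/25 + (23√5)/1250)/n^4. -/

import Mathlib

/-- The Apéry numbers `B_n = Σ_{k=0}^n C(n,k)^2 C(n+k,k)`. -/

def aperyB (n : ℕ) : ℕ :=
  ∑ k ∈ Finset.range (n + 1), (Nat.choose n k) ^ 2 * Nat.choose (n + k) k

lemma hBcast (m : ℕ) : (aperyB m : ℝ)
    = ∑ k ∈ Finset.range (m+1), ((m.choose k : ℝ))^2 * (((m+k).choose k : ℝ)) := by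
  unfold aperyB; push_cast; rfl

noncomputable def aperyG (n k : ℕ) : ℝ :=
  (k:ℝ)^3 * ((k:ℝ)^2 + (6*(n:ℝ)+7)*(k:ℝ) - ((n:ℝ)+2)*(11*(n:ℝ)+15))
    * ((n+2).choose k : ℝ)^2 * ((n+k).choose k : ℝ)

lemma apery_local (n k : ℕ) :
    ((n:ℝ)+1)*((n:ℝ)+2)^2 *
      ( ((n:ℝ)+2)^2 * (((n+2).choose k : ℝ)^2 * ((n+2+k).choose k : ℝ))
        - (11*((n:ℝ)+2)^2 - 11*((n:ℝ)+2) + 3) * (((n+1).choose k : ℝ)^2 * ((n+1+k).choose k : ℝ))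
        - ((n:ℝ)+1)^2 * ((n.choose k : ℝ)^2 * ((n+k).choose k : ℝ)) )
      = aperyG n (k+1) - aperyG n k := by
  set x : ℝ := (n:ℝ) with hxdef
  set y : ℝ := (k:ℝ) with hydef
  have hx1 : x + 1 ≠ 0 := by positivity
  have hx2 : x + 2 ≠ 0 := by positivity
  have hy1 : y + 1 ≠ 0 := by positivity
  -- cast identities
  have hA : ((n+1).choose k : ℝ) * (x+2) = ((n+2).choose k : ℝ) * (x+2-y) := by
    rcases le_or_gt k (n+2) with h | h
    · have := Nat.choose_mul_succ_eq (n+1) k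
      have h' : ((n+1).choose k * (n+2) : ℕ) = ((n+2).choose k * (n+2-k) : ℕ) := this
      have := congrArg (fun m : ℕ => (m:ℝ)) h'
      push_cast [Nat.cast_sub h] at this
      push_cast; linarith [this]
    · rw [Nat.choose_eq_zero_of_lt (by omega), Nat.choose_eq_zero_of_lt (by omega)]
      push_cast; ring
  have hB : (n.choose k : ℝ) * (x+1) = ((n+1).choose k : ℝ) * (x+1-y) := by
    rcases le_or_gt k (n+1) with h | h
    · have h' : (n.choose k * (n+1) : ℕ) = ((n+1).choose k * (n+1-k) : ℕ) :=
        Nat.choose_mul_succ_eq n k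
      have := congrArg (fun m : ℕ => (m:ℝ)) h'
      push_cast [Nat.cast_sub h] at this
      push_cast; linarith [this]
    · rw [Nat.choose_eq_zero_of_lt (by omega), Nat.choose_eq_zero_of_lt (by omega)]
      push_cast; ring
  have hC : ((n+1+k).choose k : ℝ) * (x+1) = ((n+k).choose k : ℝ) * (x+y+1) := by
    have h1 : (n+k).choose k = (n+k).choose n := by
      rw [← Nat.choose_symm (Nat.le_add_right n k)]; congr 1; omega
    have h2 : (n+1+k).choose k = (n+1+k).choose (n+1) := by
      rw [← Nat.choose_symm (by omega : n+1 ≤ n+1+k)]; congr 1; omega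
    have h3 := Nat.add_one_mul_choose_eq (n+k) n
    have h' : ((n+k+1) * (n+k).choose n : ℕ) = ((n+k+1).choose (n+1) * (n+1) : ℕ) := h3
    have := congrArg (fun m : ℕ => (m:ℝ)) h'
    push_cast at this
    rw [h1, h2]
    push_cast [show n+1+k = n+k+1 by omega]
    linarith [this]
  have hD : ((n+2+k).choose k : ℝ) * (x+2) = ((n+1+k).choose k : ℝ) * (x+y+2) := by
    have h1 : (n+1+k).choose k = (n+1+k).choose (n+1) := by
      rw [← Nat.choose_symm (by omega : n+1 ≤ n+1+k)]; congr 1; omega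
    have h2 : (n+2+k).choose k = (n+2+k).choose (n+2) := by
      rw [← Nat.choose_symm (by omega : n+2 ≤ n+2+k)]; congr 1; omega
    have h3 := Nat.add_one_mul_choose_eq (n+1+k) (n+1)
    have h' : ((n+1+k+1) * (n+1+k).choose (n+1) : ℕ) = ((n+1+k+1).choose (n+2) * (n+2) : ℕ) := h3
    have := congrArg (fun m : ℕ => (m:ℝ)) h'
    push_cast at this
    rw [h1, h2, show n+2+k = n+1+k+1 by omega]
    push_cast
    linarith [this]
  have hE : ((n+2).choose (k+1) : ℝ) * (y+1) = ((n+2).choose k : ℝ) * (x+2-y) := by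
    rcases le_or_gt k (n+2) with h | h
    · have h' : ((n+2).choose (k+1) * (k+1) : ℕ) = ((n+2).choose k * (n+2-k) : ℕ) :=
        Nat.choose_succ_right_eq (n+2) k
      have := congrArg (fun m : ℕ => (m:ℝ)) h'
      push_cast [Nat.cast_sub h] at this
      push_cast; linarith [this]
    · rw [Nat.choose_eq_zero_of_lt (by omega), Nat.choose_eq_zero_of_lt (by omega)]
      push_cast; ring
  have hF : ((n+(k+1)).choose (k+1) : ℝ) * (y+1) = ((n+k).choose k : ℝ) * (x+y+1) := by
    have h3 := Nat.add_one_mul_choose_eq (n+k) k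
    have h' : ((n+k+1) * (n+k).choose k : ℕ) = ((n+k+1).choose (k+1) * (k+1) : ℕ) := h3
    have := congrArg (fun m : ℕ => (m:ℝ)) h'
    push_cast at this
    rw [show n+(k+1) = n+k+1 by omega]
    push_cast
    linarith [this]
  -- abbreviations
  set a : ℝ := ((n+2).choose k : ℝ) with ha
  set b : ℝ := ((n+k).choose k : ℝ) with hb
  have ec1 : ((n+1).choose k : ℝ) = a * (x+2-y) / (x+2) := by
    field_simp; linear_combination hA
  have ec0 : (n.choose k : ℝ) = a * (x+2-y) * (x+1-y) / ((x+2)*(x+1)) := by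
    field_simp; linear_combination (x+2)*hB + (x+1-y)*hA
  have ed1 : ((n+1+k).choose k : ℝ) = b * (x+y+1) / (x+1) := by
    field_simp; linear_combination hC
  have ed2 : ((n+2+k).choose k : ℝ) = b * (x+y+1) * (x+y+2) / ((x+2)*(x+1)) := by
    field_simp; linear_combination (x+1)*hD + (x+y+2)*hC
  have ee1 : ((n+2).choose (k+1) : ℝ) = a * (x+2-y) / (y+1) := by
    field_simp; linear_combination hE
  have ef1 : ((n+(k+1)).choose (k+1) : ℝ) = b * (x+y+1) / (y+1) := by
    field_simp; linear_combination hF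
  unfold aperyG
  push_cast
  rw [ec1, ec0, ed1, ed2, ee1, ef1]
  field_simp
  ring

lemma apery_rec (n : ℕ) :
    ((n:ℝ)+2)^2 * (aperyB (n+2) : ℝ)
      = (11*((n:ℝ)+2)^2 - 11*((n:ℝ)+2) + 3) * (aperyB (n+1) : ℝ)
        + ((n:ℝ)+1)^2 * (aperyB n : ℝ) := by
  have e2 : (aperyB (n+2) : ℝ)
      = ∑ k ∈ Finset.range (n+3), (((n+2).choose k : ℝ))^2 * (((n+2+k).choose k : ℝ)) := by
    rw [hBcast]
  have e1 : (aperyB (n+1) : ℝ)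
      = ∑ k ∈ Finset.range (n+3), (((n+1).choose k : ℝ))^2 * (((n+1+k).choose k : ℝ)) := by
    rw [hBcast]
    apply Finset.sum_subset
    · intro x hx; simp only [Finset.mem_range] at *; omega
    · intro x _ hnx
      simp only [Finset.mem_range, not_lt] at hnx
      rw [Nat.choose_eq_zero_of_lt (by omega)]
      simp
  have e0 : (aperyB n : ℝ)
      = ∑ k ∈ Finset.range (n+3), ((n.choose k : ℝ))^2 * (((n+k).choose k : ℝ)) := by
    rw [hBcast]
    apply Finset.sum_subset
    · intro x hx; simp only [Finset.mem_range] at *; omega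
    · intro x _ hnx
      simp only [Finset.mem_range, not_lt] at hnx
      rw [Nat.choose_eq_zero_of_lt (by omega)]
      simp
  have tele : ∑ k ∈ Finset.range (n+3), (aperyG n (k+1) - aperyG n k)
      = aperyG n (n+3) - aperyG n 0 := Finset.sum_range_sub (aperyG n) (n+3)
  have lin : ∀ (c1 c2 c3 : ℝ) (f1 f2 f3 : ℕ → ℝ) (s : Finset ℕ),
      c1 * ∑ k ∈ s, f1 k - c2 * ∑ k ∈ s, f2 k - c3 * ∑ k ∈ s, f3 k
        = ∑ k ∈ s, (c1 * f1 k - c2 * f2 k - c3 * f3 k) := by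
    intros c1 c2 c3 f1 f2 f3 s
    rw [Finset.mul_sum, Finset.mul_sum, Finset.mul_sum, ← Finset.sum_sub_distrib,
      ← Finset.sum_sub_distrib]
  set c : ℝ := ((n:ℝ)+1)*((n:ℝ)+2)^2 with hc
  have local' : ∀ k ∈ Finset.range (n+3),
      (c*(((n:ℝ)+2)^2)) * ((((n+2).choose k : ℝ))^2 * (((n+2+k).choose k : ℝ)))
      - (c*(11*((n:ℝ)+2)^2 - 11*((n:ℝ)+2) + 3)) * ((((n+1).choose k : ℝ))^2 * (((n+1+k).choose k : ℝ)))
      - (c*(((n:ℝ)+1)^2)) * (((n.choose k : ℝ))^2 * (((n+k).choose k : ℝ)))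
        = aperyG n (k+1) - aperyG n k := fun k _ => by
    rw [hc]; linear_combination apery_local n k
  have S : (c*(((n:ℝ)+2)^2)) * (aperyB (n+2) : ℝ)
      - (c*(11*((n:ℝ)+2)^2 - 11*((n:ℝ)+2) + 3)) * (aperyB (n+1) : ℝ)
      - (c*(((n:ℝ)+1)^2)) * (aperyB n : ℝ) = 0 := by
    rw [e2, e1, e0, lin, Finset.sum_congr rfl local', tele]
    unfold aperyG
    rw [Nat.choose_eq_zero_of_lt (show n+2 < n+3 by omega)]
    push_cast
    ring
  have hcpos : c ≠ 0 := by rw [hc]; positivity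
  have h2 := mul_left_cancel₀ hcpos (show c * (((n:ℝ)+2)^2 * (aperyB (n+2) : ℝ))
      = c * ((11*((n:ℝ)+2)^2 - 11*((n:ℝ)+2) + 3) * (aperyB (n+1) : ℝ)
        + ((n:ℝ)+1)^2 * (aperyB n : ℝ)) from by linear_combination S)
  exact h2


noncomputable def Tf (x : ℝ) : ℝ :=
  11 / 2 + (5 * Real.sqrt 5) / 2 - (11 / 2 + (5 * Real.sqrt 5) / 2) / x
    + ((7 * Real.sqrt 5) / 10 + 3 / 2) / x ^ 2 + 1 / (25 * x ^ 3)
    + (1 / 25 + (23 * Real.sqrt 5) / 1250) / x ^ 4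

noncomputable def TNf (y : ℝ) : ℝ :=
  (11/2 + (5*Real.sqrt 5)/2) * (y^4 - y^3) + (3/2 + (7*Real.sqrt 5)/10) * y^2
    + (1/25) * y + (1/25 + (23*Real.sqrt 5)/1250)

noncomputable def Ef (x : ℝ) : ℝ := (11*x^2 - 11*x + 3) * TNf (x-1) + (x-1)^6

noncomputable def lowB (x : ℝ) : ℝ := 11 - 11/x + 3/x^2 + ((x-1)^2/x^2)/Tf (x-1)

lemma s_lo : (2.2360679774:ℝ) < Real.sqrt 5 := by
  rw [show ((2.2360679774:ℝ) < Real.sqrt 5) ↔ _ from Real.lt_sqrt (by norm_num)]; norm_num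
lemma s_hi : Real.sqrt 5 < 2.2360679775 := by
  rw [show (Real.sqrt 5 < (2.2360679775:ℝ)) ↔ _ from Real.sqrt_lt' (by norm_num)]; norm_num
lemma s_sq : Real.sqrt 5 ^ 2 = 5 := Real.sq_sqrt (by norm_num)

lemma Tf_eq {y : ℝ} (hy : y ≠ 0) : Tf y = TNf y / y^4 := by
  unfold Tf TNf; field_simp; ring

lemma TNf_pos {y : ℝ} (hy : 6 ≤ y) : 0 < TNf y := by
  have h := s_lo
  have h3 : 0 < y^3 := by positivity
  have h2 : 0 < y^2 := by positivity
  unfold TNf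
  nlinarith [mul_pos h3 (show (0:ℝ) < y - 1 by linarith)]

lemma Tf_pos {y : ℝ} (hy : 6 ≤ y) : 0 < Tf y := by
  rw [Tf_eq (by linarith : y ≠ 0)]
  have := TNf_pos hy
  positivity

lemma Ef_pos {x : ℝ} (hx : 7 ≤ x) : 0 < Ef x := by
  have h1 := TNf_pos (show (6:ℝ) ≤ x - 1 by linarith)
  have h2 : (0:ℝ) < 11*x^2 - 11*x + 3 := by nlinarith
  have h3 : (0:ℝ) ≤ (x-1)^6 := by positivity
  unfold Ef
  nlinarith [mul_pos h2 h1]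

lemma lowB_eq {x : ℝ} (hx : 7 ≤ x) : lowB x = Ef x / (x^2 * TNf (x-1)) := by
  have h1 := TNf_pos (show (6:ℝ) ≤ x - 1 by linarith)
  have hx0 : x ≠ 0 := by linarith
  have hxm : x - 1 ≠ 0 := by linarith
  unfold lowB Ef
  rw [Tf_eq hxm]
  field_simp

lemma lowB_pos {x : ℝ} (hx : 7 ≤ x) : 0 < lowB x := by
  rw [lowB_eq hx]
  have h1 := TNf_pos (show (6:ℝ) ≤ x - 1 by linarith)
  have h2 := Ef_pos hx
  positivity

lemma pol_pos {x : ℝ} (hx : 7 ≤ x) :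
    0 < TNf (x+1) * Ef x - (11*x^2 + 11*x + 3)*(x+1)^2 * Ef x
        - x^4*(x+1)^2 * TNf (x-1) := by
  set s : ℝ := Real.sqrt 5 with hs
  have hsq : s^2 = 5 := s_sq
  have hlo : (2.2360679774:ℝ) < s := s_lo
  have hred : TNf (x+1) * Ef x - (11*x^2 + 11*x + 3)*(x+1)^2 * Ef x
        - x^4*(x+1)^2 * TNf (x-1)
      = (-9780668803/62500 + (267960577/3125)*s)
        + (-38128672353/312500 + (1182251132/15625)*s)*(x-7)
        + (-11928155681/312500 + (440443213/15625)*s)*(x-7)^2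
        + (-1497489/250 + (177778481/31250)*s)*(x-7)^3
        + (-589457/1250 + (410784/625)*s)*(x-7)^4
        + (-149/10 + (51579/1250)*s)*(x-7)^5
        + ((11/10)*s)*(x-7)^6 := by
    unfold Ef TNf
    linear_combination ((5/2*(x+1)^4 - 5/2*(x+1)^3 + 7/10*(x+1)^2 + 23/1250)
      * (11*x^2 - 11*x + 3)
      * (5/2*(x-1)^4 - 5/2*(x-1)^3 + 7/10*(x-1)^2 + 23/1250)) * hsq
  rw [hred]
  have hm : (0:ℝ) ≤ x - 7 := by linarith
  have hsl : (0:ℝ) ≤ s - 2.2360679774 := by linarith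
  nlinarith [mul_nonneg hsl (pow_nonneg hm 1), mul_nonneg hsl (pow_nonneg hm 2),
    mul_nonneg hsl (pow_nonneg hm 3), mul_nonneg hsl (pow_nonneg hm 4),
    mul_nonneg hsl (pow_nonneg hm 5), mul_nonneg hsl (pow_nonneg hm 6),
    pow_nonneg hm 1, pow_nonneg hm 2, pow_nonneg hm 3, pow_nonneg hm 4,
    pow_nonneg hm 5, pow_nonneg hm 6, hsl]

lemma step_ineq {x : ℝ} (hx : 7 ≤ x) :
    11 - 11/(x+1) + 3/(x+1)^2 + (x^2/(x+1)^2)/lowB x < Tf (x+1) := by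
  have hTN : 0 < TNf (x-1) := TNf_pos (by linarith)
  have hE : 0 < Ef x := Ef_pos hx
  have hx0 : x ≠ 0 := by linarith
  have hx1 : x + 1 ≠ 0 := by linarith
  have key : Tf (x+1) - (11 - 11/(x+1) + 3/(x+1)^2 + (x^2/(x+1)^2)/lowB x)
      = (TNf (x+1) * Ef x - (11*x^2 + 11*x + 3)*(x+1)^2 * Ef x
          - x^4*(x+1)^2 * TNf (x-1)) / ((x+1)^4 * Ef x) := by
    rw [lowB_eq hx, Tf_eq hx1]
    have h1 : TNf (x-1) ≠ 0 := hTN.ne'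
    have h2 : Ef x ≠ 0 := hE.ne'
    field_simp
    ring
  have hpol := pol_pos hx
  have : 0 < Tf (x+1) - (11 - 11/(x+1) + 3/(x+1)^2 + (x^2/(x+1)^2)/lowB x) := by
    rw [key]; positivity
  linarith

lemma Tf6_eq : Tf 6 = 149857/32400 + (3406523/1620000) * Real.sqrt 5 := by
  unfold Tf; norm_num; ring
lemma Tf7_eq : Tf 7 = 569641/120050 + (3237074/1500625) * Real.sqrt 5 := by
  unfold Tf; norm_num; ring
lemma base_up : (1004307:ℝ)/104959 < Tf 7 := by
  rw [Tf7_eq]; linarith [s_lo]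
lemma base_low : lowB 7 < (1004307:ℝ)/104959 := by
  unfold lowB
  rw [show (7:ℝ)-1 = 6 by norm_num, Tf6_eq]
  have hpos : (0:ℝ) < 149857/32400 + (3406523/1620000) * Real.sqrt 5 := by
    linarith [s_lo]
  have key : ((6:ℝ)^2/7^2)/(149857/32400 + (3406523/1620000) * Real.sqrt 5)
      < 1004307/104959 - (11 - 11/7 + 3/7^2) := by
    rw [div_lt_iff₀ hpos]
    nlinarith [s_lo]
  norm_num at key ⊢
  linarith [key]

lemma aperyB_pos (m : ℕ) : 0 < (aperyB m : ℝ) := by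
  have h : 0 < aperyB m := by
    unfold aperyB
    apply Finset.sum_pos'
    · intro i _; exact Nat.zero_le _
    · exact ⟨0, Finset.mem_range.2 (by omega), by simp⟩
  exact_mod_cast h

lemma sandwich : ∀ j : ℕ, 6 ≤ j →
    lowB ((j:ℝ)+1) < (aperyB (j+1) : ℝ)/(aperyB j : ℝ)
      ∧ (aperyB (j+1) : ℝ)/(aperyB j : ℝ) < Tf ((j:ℝ)+1) := by
  intro j hj
  induction j, hj using Nat.le_induction with
  | base =>
      have h6 : aperyB 6 = 104959 := by decide
      have h7 : aperyB (6+1) = 1004307 := by decide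
      rw [h6, h7, show ((6:ℕ):ℝ) + 1 = 7 by norm_num]
      constructor
      · have := base_low; push_cast; linarith
      · have := base_up; push_cast; linarith
  | succ j hj ih =>
      have hj6 : (6:ℝ) ≤ (j:ℝ) := by exact_mod_cast hj
      have hx : (7:ℝ) ≤ (j:ℝ)+1 := by linarith
      obtain ⟨ihl, ihu⟩ := ih
      have hQ := aperyB_pos (j+1)
      have hR := aperyB_pos j
      have hP := aperyB_pos (j+2)
      have hlow := lowB_pos hx
      have hTfx := Tf_pos (show (6:ℝ) ≤ (j:ℝ)+1 by linarith)
      have hqpos : 0 < (aperyB (j+1):ℝ)/(aperyB j : ℝ) := by positivity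
      have hrec := apery_rec j
      have h1 : ((j:ℝ)+2) ≠ 0 := by positivity
      have e : (aperyB (j+2):ℝ) = (11 - 11/((j:ℝ)+2) + 3/((j:ℝ)+2)^2) * (aperyB (j+1):ℝ)
          + ((((j:ℝ)+1)^2/((j:ℝ)+2)^2)) * (aperyB j:ℝ) := by
        field_simp
        linear_combination hrec
      have hq : (aperyB (j+2):ℝ)/(aperyB (j+1) : ℝ)
          = (11 - 11/((j:ℝ)+2) + 3/((j:ℝ)+2)^2)
            + ((((j:ℝ)+1)^2/((j:ℝ)+2)^2))/((aperyB (j+1):ℝ)/(aperyB j : ℝ)) := by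
        rw [e, add_div, mul_div_cancel_right₀ _ hQ.ne', div_div_eq_mul_div]
      have hBpos : (0:ℝ) < ((j:ℝ)+1)^2/((j:ℝ)+2)^2 := by positivity
      constructor
      · -- lower bound at j+1
        have hlow1 : lowB (((j:ℝ)+1)+1) = 11 - 11/(((j:ℝ)+1)+1) + 3/(((j:ℝ)+1)+1)^2
            + ((((j:ℝ)+1)^2/(((j:ℝ)+1)+1)^2))/Tf ((j:ℝ)+1) := by
          unfold lowB
          rw [add_sub_cancel_right]
        have hmono : (((j:ℝ)+1)^2/(((j:ℝ)+1)+1)^2)/Tf ((j:ℝ)+1)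
            < (((j:ℝ)+1)^2/(((j:ℝ)+1)+1)^2)/((aperyB (j+1):ℝ)/(aperyB j : ℝ)) := by
          apply div_lt_div_of_pos_left _ hqpos ihu
          · have : (0:ℝ) < ((j:ℝ)+1)^2/(((j:ℝ)+1)+1)^2 := by positivity
            exact this
        push_cast
        rw [show j+1+1 = j+2 from rfl, hq]
        calc lowB (((j:ℝ)+1)+1)
            = 11 - 11/(((j:ℝ)+1)+1) + 3/(((j:ℝ)+1)+1)^2
              + ((((j:ℝ)+1)^2/(((j:ℝ)+1)+1)^2))/Tf ((j:ℝ)+1) := hlow1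
          _ < 11 - 11/(((j:ℝ)+1)+1) + 3/(((j:ℝ)+1)+1)^2
              + ((((j:ℝ)+1)^2/(((j:ℝ)+1)+1)^2))/((aperyB (j+1):ℝ)/(aperyB j : ℝ)) := by
                linarith [hmono]
          _ = 11 - 11/((j:ℝ)+2) + 3/((j:ℝ)+2)^2
              + (((j:ℝ)+1)^2/((j:ℝ)+2)^2)/((aperyB (j+1):ℝ)/(aperyB j : ℝ)) := by
                norm_num [show ((j:ℝ)+1)+1 = (j:ℝ)+2 by ring]
      · -- upper bound at j+1
        have hmono : (((j:ℝ)+1)^2/((j:ℝ)+2)^2)/((aperyB (j+1):ℝ)/(aperyB j : ℝ))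
            < (((j:ℝ)+1)^2/((j:ℝ)+2)^2)/lowB ((j:ℝ)+1) :=
          div_lt_div_of_pos_left hBpos hlow ihl
        have hstep := step_ineq hx
        push_cast
        rw [show j+1+1 = j+2 from rfl, hq]
        have hfin : 11 - 11/((j:ℝ)+2) + 3/((j:ℝ)+2)^2
            + (((j:ℝ)+1)^2/((j:ℝ)+2)^2)/lowB ((j:ℝ)+1) < Tf (((j:ℝ)+1)+1) := by
          have h2 : (((j:ℝ)+1)+1) = (j:ℝ)+2 := by ring
          rw [h2] at hstep
          rw [h2]
          exact hstep
        calc 11 - 11/((j:ℝ)+2) + 3/((j:ℝ)+2)^2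
              + (((j:ℝ)+1)^2/((j:ℝ)+2)^2)/((aperyB (j+1):ℝ)/(aperyB j : ℝ))
            < 11 - 11/((j:ℝ)+2) + 3/((j:ℝ)+2)^2
              + (((j:ℝ)+1)^2/((j:ℝ)+2)^2)/lowB ((j:ℝ)+1) := by linarith [hmono]
          _ < Tf (((j:ℝ)+1)+1) := hfin

theorem aperyB_ratio_upper_bound (n : ℕ) (hn : 20 ≤ n) :
    (aperyB n : ℝ) / (aperyB (n - 1) : ℝ) <
      11 / 2 + (5 * Real.sqrt 5) / 2
        - (11 / 2 + (5 * Real.sqrt 5) / 2) / (n : ℝ)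
        + ((7 * Real.sqrt 5) / 10 + 3 / 2) / (n : ℝ) ^ 2
        + 1 / (25 * (n : ℝ) ^ 3)
        + (1 / 25 + (23 * Real.sqrt 5) / 1250) / (n : ℝ) ^ 4 := by
  obtain ⟨j, rfl⟩ : ∃ j, n = j + 1 := ⟨n - 1, by omega⟩
  have hj : 6 ≤ j := by omega
  have h := (sandwich j hj).2
  rw [show j + 1 - 1 = j from rfl]
  unfold Tf at h
  push_cast at h ⊢
  convert h using 2 <;> ring
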